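/- Let $C$ be a simple associative conformal algebra and $a \in C$ an element with $a \oo{0}(a \oo{0} C) = a \oo{0} C \neq 0$. Then $\{C \oo{0} a\} \oo{\omega} (a \oo{0} C) = C$, where $X \oo{\omega} Y = \sum_{n \geq 0} X \oo{n} Y$ and $\{C \oo{0} a\} = \{x \oo{0} a\} : x \in C\}$ (span). -/

import Mathlib

open Finset

/-- The curly products `{x ⟨n⟩ y} = ∑ₛ (-1)^{n+s} (Dˢ/s!) (x ⟨n+s⟩ y)`
(a finite sum whenever the products are local, expressed via `finsum`). -/
noncomputable def curlyFn {k : Type*} [Field k]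
    {C : Type*} [AddCommGroup C] [Module k C]
    (Dop : C →ₗ[k] C) (mul : ℕ → C →ₗ[k] C →ₗ[k] C)
    (n : ℕ) (x y : C) : C :=
  ∑ᶠ s : ℕ, ((-1 : k) ^ (n + s) * ((s.factorial : k))⁻¹) • ((Dop ^ s) (mul (n + s) x y))

theorem simple_ideal_generation
    {k : Type*} [Field k] [CharZero k]
    {C : Type*} [AddCommGroup C] [Module k C]
    (Dop : C →ₗ[k] C) (mul : ℕ → C →ₗ[k] C →ₗ[k] C)
    (hloc : ∀ x y : C, ∃ N : ℕ, ∀ n ≥ N, mul n x y = 0)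
    (hC2 : ∀ (n : ℕ) (x y : C),
      mul n x (Dop y) = Dop (mul n x y) + (n : k) • mul (n - 1) x y)
    (hC3 : ∀ (n : ℕ) (x y : C),
      mul n (Dop x) y = -((n : k)) • mul (n - 1) x y)
    (hassocL : ∀ (n m : ℕ) (u v w : C),
      mul m (mul n u v) w =
        ∑ s ∈ range (n + 1),
          ((-1 : k) ^ s * (n.choose s : k)) • mul (n - s) u (mul (m + s) v w))
    (hassocR : ∀ (n m : ℕ) (u v w : C),
      mul n u (mul m v w) =
        ∑ s ∈ range (n + 1), ((n.choose s : k)) • mul (m + s) (mul (n - s) u v) w)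
    (hCC : ∃ (n : ℕ) (x y : C), mul n x y ≠ 0)
    (hsimple : ∀ I : Submodule k C,
      (∀ x ∈ I, Dop x ∈ I) →
      (∀ (n : ℕ) (c : C), ∀ x ∈ I, mul n c x ∈ I) →
      (∀ (n : ℕ) (c : C), ∀ x ∈ I, mul n x c ∈ I) →
      I = ⊥ ∨ I = ⊤)
    (a : C)
    (hfix : LinearMap.range ((mul 0 a) ∘ₗ (mul 0 a)) = LinearMap.range (mul 0 a))
    (hne : LinearMap.range (mul 0 a) ≠ ⊥) :
    Submodule.span k
      {z : C | ∃ (n : ℕ) (x y : C), mul n (curlyFn Dop mul 0 x a) (mul 0 a y) = z}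
      = ⊤ := by
  -- iterated hC3:
  have hDpow : ∀ (s n : ℕ) (u w : C),
      mul n ((Dop ^ s) u) w
        = ((-1 : k) ^ s * (n.descFactorial s : k)) • mul (n - s) u w := by
    intro s
    induction s with
    | zero => intro n u w; simp
    | succ s ih =>
      intro n u w
      rw [pow_succ, Module.End.mul_apply, ih, hC3, Nat.descFactorial_succ, smul_smul]
      have hidx : n - s - 1 = n - (s + 1) := by omega
      rw [hidx]
      congr 1
      push_cast
      ring
  -- the key identity: {x ⟨0⟩ a} ⟨n⟩ w = x ⟨n⟩ (a ⟨0⟩ w)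
  have key : ∀ (n : ℕ) (x w : C),
      mul n (curlyFn Dop mul 0 x a) w = mul n x (mul 0 a w) := by
    intro n x w
    obtain ⟨N, hN⟩ := hloc x a
    have hsupp : (Function.support fun s : ℕ =>
        ((-1 : k) ^ (0 + s) * ((s.factorial : k))⁻¹) • ((Dop ^ s) (mul (0 + s) x a)))
        ⊆ ↑(range (N + n + 1)) := by
      intro s hs
      simp only [Function.mem_support] at hs
      by_contra hsn
      simp only [coe_range, Set.mem_Iio, not_lt] at hsn
      apply hs
      rw [hN (0 + s) (by omega)]
      simp
    have hcurly : curlyFn Dop mul 0 x a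
        = ∑ s ∈ range (N + n + 1),
            ((-1 : k) ^ (0 + s) * ((s.factorial : k))⁻¹) • ((Dop ^ s) (mul (0 + s) x a)) := by
      rw [curlyFn, finsum_eq_sum_of_support_subset _ hsupp]
    rw [hcurly, map_sum]
    simp only [LinearMap.sum_apply, map_smul, LinearMap.smul_apply, hDpow, zero_add, smul_smul]
    have hterm : ∀ s : ℕ,
        ((-1 : k) ^ s * ((s.factorial : k))⁻¹ * ((-1 : k) ^ s * (n.descFactorial s : k)))
          = (n.choose s : k) := by
      intro s
      rw [Nat.descFactorial_eq_factorial_mul_choose]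
      push_cast
      have hf : ((s.factorial : k)) ≠ 0 := Nat.cast_ne_zero.2 s.factorial_ne_zero
      field_simp
      rw [← pow_mul, mul_comm s 2, pow_mul]
      norm_num [mul_comm]
    simp only [hterm]
    -- drop terms with s > n
    have htrunc : (∑ s ∈ range (N + n + 1), (n.choose s : k) • mul (n - s) (mul s x a) w)
        = ∑ s ∈ range (n + 1), (n.choose s : k) • mul (n - s) (mul s x a) w := by
      refine (Finset.sum_subset (Finset.range_subset_range.2 (by omega : n + 1 ≤ N + n + 1)) ?_).symm
      intro s _ hs
      simp only [mem_range, not_lt] at hs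
      rw [Nat.choose_eq_zero_of_lt (by omega)]
      simp
    rw [htrunc, hassocR,
      ← Finset.sum_range_reflect (fun j => (n.choose j : k) • mul (0 + j) (mul (n - j) x a) w)]
    apply Finset.sum_congr rfl
    intro s hs
    simp only [mem_range] at hs
    have h1 : n + 1 - 1 - s = n - s := by omega
    rw [h1, Nat.choose_symm (by omega : s ≤ n)]
    have h2 : n - (n - s) = s := by omega
    rw [h2]
    norm_num
  set S : Set C :=
    {z : C | ∃ (n : ℕ) (x y : C), mul n (curlyFn Dop mul 0 x a) (mul 0 a y) = z} with hS
  set I : Submodule k C := Submodule.span k S with hI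
  -- every element of the simple form is a generator
  have memS : ∀ (n : ℕ) (x y : C), mul n x (mul 0 a y) ∈ S := by
    intro n x y
    have : mul 0 a y ∈ LinearMap.range ((mul 0 a) ∘ₗ (mul 0 a)) := by
      rw [hfix]; exact ⟨y, rfl⟩
    obtain ⟨y', hy'⟩ := this
    exact ⟨n, x, y', by rw [key]; rw [show (mul 0 a) ((mul 0 a) y') = mul 0 a y from hy']⟩
  have memI : ∀ (n : ℕ) (x y : C), mul n x (mul 0 a y) ∈ I :=
    fun n x y => Submodule.subset_span (memS n x y)
  -- conversely, every generator has the simple form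
  have genform : ∀ z ∈ S, ∃ (n : ℕ) (x y : C), z = mul n x (mul 0 a y) := by
    rintro z ⟨n, x, y, rfl⟩
    exact ⟨n, x, mul 0 a y, by rw [key]⟩
  -- I is D-invariant
  have hD : ∀ x ∈ I, Dop x ∈ I := by
    intro z hz
    induction hz using Submodule.span_induction with
    | mem z hzS =>
      obtain ⟨n, x, y, rfl⟩ := genform z hzS
      have e1 : Dop (mul 0 a y) = mul 0 a (Dop y) := by
        have := hC2 0 a y
        simpa using this.symm
      have e2 : Dop (mul n x (mul 0 a y))
          = mul n x (mul 0 a (Dop y)) - (n : k) • mul (n - 1) x (mul 0 a y) := by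
        have := hC2 n x (mul 0 a y)
        rw [e1] at this
        rw [this]; abel
      rw [e2]
      exact sub_mem (memI _ _ _) (Submodule.smul_mem _ _ (memI _ _ _))
    | zero => simpa using Submodule.zero_mem I
    | add u v _ _ hu hv => rw [map_add]; exact add_mem hu hv
    | smul c u _ hu => rw [map_smul]; exact Submodule.smul_mem _ _ hu
  -- left multiplication closure
  have hL : ∀ (m : ℕ) (c : C), ∀ z ∈ I, mul m c z ∈ I := by
    intro m c z hz
    induction hz using Submodule.span_induction with
    | mem z hzS =>
      obtain ⟨n, x, y, rfl⟩ := genform z hzS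
      rw [hassocR m n c x (mul 0 a y)]
      exact Submodule.sum_mem _ fun s _ => Submodule.smul_mem _ _ (memI _ _ _)
    | zero => simpa using Submodule.zero_mem I
    | add u v _ _ hu hv => rw [map_add]; exact add_mem hu hv
    | smul r u _ hu => rw [map_smul]; exact Submodule.smul_mem _ _ hu
  -- right multiplication closure
  have hR : ∀ (m : ℕ) (c : C), ∀ z ∈ I, mul m z c ∈ I := by
    intro m c z hz
    induction hz using Submodule.span_induction with
    | mem z hzS =>
      obtain ⟨n, x, y, rfl⟩ := genform z hzS
      rw [hassocL n m x (mul 0 a y) c]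
      refine Submodule.sum_mem _ fun s _ => Submodule.smul_mem _ _ ?_
      have e : mul (m + s) (mul 0 a y) c = mul 0 a (mul (m + s) y c) := by
        have := hassocL 0 (m + s) a y c
        simpa using this
      rw [e]
      exact memI _ _ _
    | zero => simpa using Submodule.zero_mem I
    | add u v _ _ hu hv => rw [LinearMap.map_add₂]; exact add_mem hu hv
    | smul r u _ hu => rw [LinearMap.map_smul₂]; exact Submodule.smul_mem _ _ hu
  -- I is nonzero
  have hInonbot : I ≠ ⊥ := by
    intro hbot
    apply hne
    rw [← hfix]
    rw [Submodule.eq_bot_iff] at hbot ⊢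
    intro z hzr
    obtain ⟨v, rfl⟩ := hzr
    exact hbot _ (memI 0 a v)
  rcases hsimple I hD hL hR with h | h
  · exact absurd h hInonbot
  · exact h
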